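/- Let (t_k) be a sequence of positive reals with t_k → 0, and for each k let (x^k,y^k) be a Karush–Kuhn–Tucker point of the Scholtes-type regularization S(t_k). Suppose (x^k,y^k) → (x̄,ȳ) as k → ∞ (so that (x̄,ȳ) is feasible for the regularized continuous reformulation R) and that MPOC-LICQ holds at (x̄,ȳ). Then (x̄,ȳ) is a T-stationary point of R. -/

import Mathlib

open scoped Classical
open Finset Filter Topology

noncomputable section
namespace Scholtes

/-- Vectors in ℝⁿ. -/
abbrev Vec (n : ℕ) := Fin n → ℝ

variable {n : ℕ} {P Q : Type*} [Fintype P] [Fintype Q]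

/-- Euclidean dot product. -/
def dot (u v : Vec n) : ℝ := ∑ i, u i * v i

/-- Gradient: vector of partial derivatives. -/
def grad (f : Vec n → ℝ) (x : Vec n) : Vec n := fun i => fderiv ℝ f x (Pi.single i 1)

/-- Hessian bilinear form of `L` at `z`, evaluated at directions `ξ`, `ζ`. -/
def hess (L : Vec n × Vec n → ℝ) (z ξ ζ : Vec n × Vec n) : ℝ :=
  fderiv ℝ (fun w => fderiv ℝ L w ξ) z ζ

/-- The pair vector (e_i, 0) ∈ ℝ²ⁿ. -/
def ex (i : Fin n) : Vec n × Vec n := (Pi.single i 1, 0)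

/-- The pair vector (0, e_i) ∈ ℝ²ⁿ. -/
def ey (i : Fin n) : Vec n × Vec n := (0, Pi.single i 1)

/-- The pair vector (0, e) ∈ ℝ²ⁿ, where e is the all-ones vector. -/
def eAll : Vec n × Vec n := (0, fun _ => 1)

/-- The pair vector (y_i e_i, x_i e_i) ∈ ℝ²ⁿ. -/
def hvec (x y : Vec n) (i : Fin n) : Vec n × Vec n := (Pi.single i (y i), Pi.single i (x i))

/-- The number of negative eigenvalues of the bilinear form `B` restricted to the
(sub)space `T`, expressed as the maximal dimension of a linear subspace of `T` on
which the associated quadratic form is negative definite. -/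
def negIndex (B : (Vec n × Vec n) → (Vec n × Vec n) → ℝ) (T : (Vec n × Vec n) → Prop) : ℕ :=
  sSup {d : ℕ | ∃ W : Submodule ℝ (Vec n × Vec n),
    (∀ ξ ∈ W, T ξ) ∧ Module.finrank ℝ W = d ∧ ∀ ξ ∈ W, ξ ≠ 0 → B ξ ξ < 0}

/-- The data and standing assumptions of the paper: objective `f`, equality
constraints `h`, inequality constraints `g`, positive pairwise different linear
coefficients `c`, cardinality bound `s` and regularization parameter `ε`. -/
structure Setting (n : ℕ) (P Q : Type*) [Fintype P] [Fintype Q] where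
  f : Vec n → ℝ
  h : P → Vec n → ℝ
  g : Q → Vec n → ℝ
  c : Vec n
  s : ℕ
  ε : ℝ
  hn : 1 ≤ n
  hf : ContDiff ℝ 2 f
  hh : ∀ p, ContDiff ℝ 2 (h p)
  hg : ∀ q, ContDiff ℝ 2 (g q)
  hcpos : ∀ i, 0 < c i
  hcinj : Function.Injective c
  hs : s < n
  hεpos : 0 < ε
  hεle : ε ≤ 1 / ((n : ℝ) - s)

/-- Index set a01: x̄_i = 0, ȳ_i > 0. -/
def a01 (x y : Vec n) : Finset (Fin n) := univ.filter fun i => x i = 0 ∧ 0 < y i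

/-- Index set a10: x̄_i ≠ 0, ȳ_i = 0. -/
def a10 (x y : Vec n) : Finset (Fin n) := univ.filter fun i => x i ≠ 0 ∧ y i = 0

/-- Index set a00: x̄_i = 0, ȳ_i = 0. -/
def a00 (x y : Vec n) : Finset (Fin n) := univ.filter fun i => x i = 0 ∧ y i = 0

/-- Index set N(y): y_i = 0. -/
def Nact (y : Vec n) : Finset (Fin n) := univ.filter fun i => y i = 0

/-- Index set H≥(x,y): x_i y_i = −t. -/
def Hge (t : ℝ) (x y : Vec n) : Finset (Fin n) := univ.filter fun i => x i * y i = -t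

/-- Index set H≤(x,y): x_i y_i = t. -/
def Hle (t : ℝ) (x y : Vec n) : Finset (Fin n) := univ.filter fun i => x i * y i = t

/-- Index set H(x,y) = H≥ ∪ H≤. -/
def Hact (t : ℝ) (x y : Vec n) : Finset (Fin n) := Hge t x y ∪ Hle t x y

/-- Active inequality constraints Q0(x). -/
def Q0 (D : Setting n P Q) (x : Vec n) : Finset Q := univ.filter fun q => D.g q x = 0

/-- Active upper bounds E(y): y_i = 1 + ε. -/
def Eact (D : Setting n P Q) (y : Vec n) : Finset (Fin n) := univ.filter fun i => y i = 1 + D.ε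

/-- Index set O(x,y) = complement of E(y) ∪ N(y) ∪ H(x,y). -/
def Oact (D : Setting n P Q) (t : ℝ) (x y : Vec n) : Finset (Fin n) :=
  (Eact D y ∪ Nact y ∪ Hact t x y)ᶜ

/-- Feasibility for the regularized continuous reformulation R. -/
def feasR (D : Setting n P Q) (x y : Vec n) : Prop :=
  (∀ p, D.h p x = 0) ∧ (∀ q, 0 ≤ D.g q x) ∧ ((n : ℝ) - D.s ≤ ∑ i, y i) ∧
  (∀ i, x i * y i = 0) ∧ (∀ i, 0 ≤ y i ∧ y i ≤ 1 + D.ε)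

/-- Feasibility for the Scholtes-type regularization S(t). -/
def feasS (D : Setting n P Q) (t : ℝ) (x y : Vec n) : Prop :=
  (∀ p, D.h p x = 0) ∧ (∀ q, 0 ≤ D.g q x) ∧ ((n : ℝ) - D.s ≤ ∑ i, y i) ∧
  (∀ i, -t ≤ x i * y i ∧ x i * y i ≤ t) ∧ (∀ i, 0 ≤ y i ∧ y i ≤ 1 + D.ε)

/-- Multipliers for T-stationarity (defined on the whole index ranges). -/
structure TMult (n : ℕ) (P Q : Type*) where
  lam : P → ℝ
  mu1 : Q → ℝ
  mu2 : Fin n → ℝ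
  mu3 : ℝ
  sig1 : Fin n → ℝ
  sig2 : Fin n → ℝ
  rho1 : Fin n → ℝ
  rho2 : Fin n → ℝ

/-- The T-stationarity equation (1) of Definition 2. -/
def TStatEq (D : Setting n P Q) (x y : Vec n) (M : TMult n P Q) : Prop :=
  ((grad D.f x, D.c) : Vec n × Vec n) =
    (∑ p, M.lam p • ((grad (D.h p) x, (0 : Vec n)) : Vec n × Vec n))
    + (∑ q ∈ Q0 D x, M.mu1 q • ((grad (D.g q) x, (0 : Vec n)) : Vec n × Vec n))
    - (∑ i ∈ Eact D y, M.mu2 i • ey i)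
    + M.mu3 • eAll
    + (∑ i ∈ a01 x y, M.sig1 i • ex i)
    + (∑ i ∈ a10 x y, M.sig2 i • ey i)
    + (∑ i ∈ a00 x y, (M.rho1 i • ex i + M.rho2 i • ey i))

/-- (x,y) is a T-stationary point of R with multipliers M. -/
def TStatAt (D : Setting n P Q) (x y : Vec n) (M : TMult n P Q) : Prop :=
  feasR D x y ∧
  (∀ q ∈ Q0 D x, 0 ≤ M.mu1 q) ∧
  (∀ i ∈ Eact D y, 0 ≤ M.mu2 i) ∧
  0 ≤ M.mu3 ∧
  M.mu3 * ((∑ i, y i) - ((n : ℝ) - D.s)) = 0 ∧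
  (∀ i ∈ a00 x y, M.rho1 i = 0 ∨ M.rho2 i ≤ 0) ∧
  TStatEq D x y M

/-- (x,y) is a T-stationary point of R. -/
def TStat (D : Setting n P Q) (x y : Vec n) : Prop := ∃ M, TStatAt D x y M

/-- MPOC-tailored LICQ at a feasible point (x,y) of R: the indicated family of
vectors in ℝ²ⁿ is linearly independent. -/
def MPOC_LICQ (D : Setting n P Q) (x y : Vec n) : Prop :=
  ∀ (lam : P → ℝ) (mu1 : Q → ℝ) (mu2 : Fin n → ℝ) (mu3 : ℝ) (s1 s2 : Fin n → ℝ),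
    ((∑ i, y i) ≠ (n : ℝ) - D.s → mu3 = 0) →
    (∑ p, lam p • ((grad (D.h p) x, (0 : Vec n)) : Vec n × Vec n))
    + (∑ q ∈ Q0 D x, mu1 q • ((grad (D.g q) x, (0 : Vec n)) : Vec n × Vec n))
    + (∑ i ∈ Eact D y, mu2 i • ey i)
    + mu3 • eAll
    + (∑ i ∈ a01 x y ∪ a00 x y, s1 i • ex i)
    + (∑ i ∈ a10 x y ∪ a00 x y, s2 i • ey i) = 0 →
    (∀ p, lam p = 0) ∧ (∀ q ∈ Q0 D x, mu1 q = 0) ∧ (∀ i ∈ Eact D y, mu2 i = 0) ∧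
    mu3 = 0 ∧ (∀ i ∈ a01 x y ∪ a00 x y, s1 i = 0) ∧ (∀ i ∈ a10 x y ∪ a00 x y, s2 i = 0)

/-- The Lagrange function L^R associated with the T-stationary point (x̄,ȳ)
and multipliers M. -/
def LagR (D : Setting n P Q) (xb yb : Vec n) (M : TMult n P Q) (z : Vec n × Vec n) : ℝ :=
  D.f z.1 + dot D.c z.2
    - (∑ p, M.lam p * D.h p z.1)
    - (∑ q ∈ Q0 D xb, M.mu1 q * D.g q z.1)
    + (∑ i ∈ Eact D yb, M.mu2 i * (z.2 i - (1 + D.ε)))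
    - M.mu3 * ((∑ i, z.2 i) - ((n : ℝ) - D.s))
    - (∑ i ∈ a01 xb yb, M.sig1 i * z.1 i)
    - (∑ i ∈ a10 xb yb, M.sig2 i * z.2 i)
    - (∑ i ∈ a00 xb yb, (M.rho1 i * z.1 i + M.rho2 i * z.2 i))

/-- Membership in the tangent space T^R at (x̄,ȳ). -/
def inTR (D : Setting n P Q) (x y : Vec n) (ξ : Vec n × Vec n) : Prop :=
  (∀ p, dot (grad (D.h p) x) ξ.1 = 0) ∧
  (∀ q ∈ Q0 D x, dot (grad (D.g q) x) ξ.1 = 0) ∧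
  (∀ i ∈ Eact D y, ξ.2 i = 0) ∧
  ((∑ i, y i) = (n : ℝ) - D.s → (∑ i, ξ.2 i) = 0) ∧
  (∀ i ∈ a00 x y ∪ a01 x y, ξ.1 i = 0) ∧
  (∀ i ∈ a00 x y ∪ a10 x y, ξ.2 i = 0)

/-- Nondegenerate T-stationary point with multipliers M (NDT1–NDT4). -/
def NondegTStatAt (D : Setting n P Q) (x y : Vec n) (M : TMult n P Q) : Prop :=
  TStatAt D x y M ∧
  MPOC_LICQ D x y ∧
  (∀ q ∈ Q0 D x, 0 < M.mu1 q) ∧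
  (∀ i ∈ Eact D y, 0 < M.mu2 i) ∧
  ((∑ i, y i) = (n : ℝ) - D.s → 0 < M.mu3) ∧
  (∀ i ∈ a00 x y, M.rho1 i ≠ 0 ∧ M.rho2 i < 0) ∧
  (∀ ξ, inTR D x y ξ → (∀ ζ, inTR D x y ζ → hess (LagR D x y M) (x, y) ξ ζ = 0) → ξ = 0)

/-- T-index: quadratic index (number of negative eigenvalues of the restricted
Hessian of L^R) plus the biactive index |a00|. -/
def TIndex (D : Setting n P Q) (x y : Vec n) (M : TMult n P Q) : ℕ :=
  negIndex (hess (LagR D x y M) (x, y)) (inTR D x y) + (a00 x y).card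

/-- Multipliers for KKT points of S(t) (defined on the whole index ranges). -/
structure SMult (n : ℕ) (P Q : Type*) where
  lam : P → ℝ
  mu1 : Q → ℝ
  mu2 : Fin n → ℝ
  mu3 : ℝ
  etaGe : Fin n → ℝ
  etaLe : Fin n → ℝ
  nu : Fin n → ℝ

/-- The KKT equation for S(t). -/
def KKTEq (D : Setting n P Q) (t : ℝ) (x y : Vec n) (M : SMult n P Q) : Prop :=
  ((grad D.f x, D.c) : Vec n × Vec n) =
    (∑ p, M.lam p • ((grad (D.h p) x, (0 : Vec n)) : Vec n × Vec n))
    + (∑ q ∈ Q0 D x, M.mu1 q • ((grad (D.g q) x, (0 : Vec n)) : Vec n × Vec n))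
    - (∑ i ∈ Eact D y, M.mu2 i • ey i)
    + M.mu3 • eAll
    + (∑ i ∈ Hge t x y, M.etaGe i • hvec x y i)
    - (∑ i ∈ Hle t x y, M.etaLe i • hvec x y i)
    + (∑ i ∈ Nact y, M.nu i • ey i)

/-- (x,y) is a KKT point of S(t) with multipliers M. -/
def KKTAt (D : Setting n P Q) (t : ℝ) (x y : Vec n) (M : SMult n P Q) : Prop :=
  feasS D t x y ∧
  (∀ q ∈ Q0 D x, 0 ≤ M.mu1 q) ∧
  (∀ i ∈ Eact D y, 0 ≤ M.mu2 i) ∧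
  0 ≤ M.mu3 ∧
  M.mu3 * ((∑ i, y i) - ((n : ℝ) - D.s)) = 0 ∧
  (∀ i ∈ Hge t x y, 0 ≤ M.etaGe i) ∧
  (∀ i ∈ Hle t x y, 0 ≤ M.etaLe i) ∧
  (∀ i ∈ Nact y, 0 ≤ M.nu i) ∧
  KKTEq D t x y M

/-- (x,y) is a KKT point of S(t). -/
def KKT (D : Setting n P Q) (t : ℝ) (x y : Vec n) : Prop := ∃ M, KKTAt D t x y M

/-- LICQ at a feasible point (x,y) of S(t). -/
def LICQ (D : Setting n P Q) (t : ℝ) (x y : Vec n) : Prop :=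
  ∀ (lam : P → ℝ) (mu1 : Q → ℝ) (mu2 : Fin n → ℝ) (mu3 : ℝ) (eta nu : Fin n → ℝ),
    ((∑ i, y i) ≠ (n : ℝ) - D.s → mu3 = 0) →
    (∑ p, lam p • ((grad (D.h p) x, (0 : Vec n)) : Vec n × Vec n))
    + (∑ q ∈ Q0 D x, mu1 q • ((grad (D.g q) x, (0 : Vec n)) : Vec n × Vec n))
    + (∑ i ∈ Eact D y, mu2 i • ey i)
    + mu3 • eAll
    + (∑ i ∈ Hact t x y, eta i • hvec x y i)
    + (∑ i ∈ Nact y, nu i • ey i) = 0 →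
    (∀ p, lam p = 0) ∧ (∀ q ∈ Q0 D x, mu1 q = 0) ∧ (∀ i ∈ Eact D y, mu2 i = 0) ∧
    mu3 = 0 ∧ (∀ i ∈ Hact t x y, eta i = 0) ∧ (∀ i ∈ Nact y, nu i = 0)

/-- The Lagrange function L^S associated with the KKT point (x̄,ȳ) of S(t)
and multipliers M. -/
def LagS (D : Setting n P Q) (t : ℝ) (xb yb : Vec n) (M : SMult n P Q)
    (z : Vec n × Vec n) : ℝ :=
  D.f z.1 + dot D.c z.2
    - (∑ p, M.lam p * D.h p z.1)
    - (∑ q ∈ Q0 D xb, M.mu1 q * D.g q z.1)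
    + (∑ i ∈ Eact D yb, M.mu2 i * (z.2 i - (1 + D.ε)))
    - M.mu3 * ((∑ i, z.2 i) - ((n : ℝ) - D.s))
    - (∑ i ∈ Hge t xb yb, M.etaGe i * (z.1 i * z.2 i + t))
    + (∑ i ∈ Hle t xb yb, M.etaLe i * (z.1 i * z.2 i - t))
    - (∑ i ∈ Nact yb, M.nu i * z.2 i)

/-- Membership in the tangent space T^S at (x,y) for S(t). -/
def inTS (D : Setting n P Q) (t : ℝ) (x y : Vec n) (ξ : Vec n × Vec n) : Prop :=
  (∀ p, dot (grad (D.h p) x) ξ.1 = 0) ∧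
  (∀ q ∈ Q0 D x, dot (grad (D.g q) x) ξ.1 = 0) ∧
  (∀ i ∈ Eact D y, ξ.2 i = 0) ∧
  ((∑ i, y i) = (n : ℝ) - D.s → (∑ i, ξ.2 i) = 0) ∧
  (∀ i ∈ Hact t x y, y i * ξ.1 i + x i * ξ.2 i = 0) ∧
  (∀ i ∈ Nact y, ξ.2 i = 0)

/-- Nondegenerate KKT point of S(t) with multipliers M (ND1–ND3). -/
def NondegKKTAt (D : Setting n P Q) (t : ℝ) (x y : Vec n) (M : SMult n P Q) : Prop :=
  KKTAt D t x y M ∧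
  LICQ D t x y ∧
  (∀ q ∈ Q0 D x, 0 < M.mu1 q) ∧
  (∀ i ∈ Eact D y, 0 < M.mu2 i) ∧
  (∀ i ∈ Hge t x y, 0 < M.etaGe i) ∧
  (∀ i ∈ Hle t x y, 0 < M.etaLe i) ∧
  (∀ i ∈ Nact y, 0 < M.nu i) ∧
  ((∑ i, y i) = (n : ℝ) - D.s → 0 < M.mu3) ∧
  (∀ ξ, inTS D t x y ξ → (∀ ζ, inTS D t x y ζ → hess (LagS D t x y M) (x, y) ξ ζ = 0) → ξ = 0)

/-- Quadratic index of a KKT point of S(t): number of negative eigenvalues of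
the restricted Hessian of L^S. -/
def QIdx (D : Setting n P Q) (t : ℝ) (x y : Vec n) (M : SMult n P Q) : ℕ :=
  negIndex (hess (LagS D t x y M) (x, y)) (inTS D t x y)


/-! ### Auxiliary machinery for Statement 8 -/

section Aux

lemma mem_a01' {x y : Vec n} {i : Fin n} : i ∈ a01 x y ↔ x i = 0 ∧ 0 < y i := by simp [a01]
lemma mem_a10' {x y : Vec n} {i : Fin n} : i ∈ a10 x y ↔ x i ≠ 0 ∧ y i = 0 := by simp [a10]
lemma mem_a00' {x y : Vec n} {i : Fin n} : i ∈ a00 x y ↔ x i = 0 ∧ y i = 0 := by simp [a00]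
lemma mem_Nact' {y : Vec n} {i : Fin n} : i ∈ Nact y ↔ y i = 0 := by simp [Nact]
lemma mem_Hge' {t : ℝ} {x y : Vec n} {i : Fin n} : i ∈ Hge t x y ↔ x i * y i = -t := by
  simp [Hge]
lemma mem_Hle' {t : ℝ} {x y : Vec n} {i : Fin n} : i ∈ Hle t x y ↔ x i * y i = t := by
  simp [Hle]
lemma mem_Q0' {D : Setting n P Q} {x : Vec n} {q : Q} : q ∈ Q0 D x ↔ D.g q x = 0 := by simp [Q0]
lemma mem_Eact' {D : Setting n P Q} {y : Vec n} {i : Fin n} :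
    i ∈ Eact D y ↔ y i = 1 + D.ε := by simp [Eact]

lemma hvec_eq (x y : Vec n) (i : Fin n) : hvec x y i = y i • ex i + x i • ey i := by
  have h1 : (Pi.single i (y i) : Vec n) = y i • (Pi.single i 1 : Vec n) := by
    rw [← Pi.single_smul, smul_eq_mul, mul_one]
  have h2 : (Pi.single i (x i) : Vec n) = x i • (Pi.single i 1 : Vec n) := by
    rw [← Pi.single_smul, smul_eq_mul, mul_one]
  simp only [hvec, ex, ey, Prod.smul_mk, smul_zero, Prod.mk_add_mk, add_zero, zero_add]
  rw [Prod.ext_iff]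
  exact ⟨h1, h2⟩

lemma per01 {V : Type*} [AddCommGroup V] [Module ℝ V] (e1 e2 : V) (η ν xk yk : ℝ)
    (hy : yk ≠ 0) :
    (η * yk) • (e1 + (xk / yk) • e2) + ν • e2 = η • (yk • e1 + xk • e2) + ν • e2 := by
  match_scalars
  · ring
  · field_simp

lemma per10 {V : Type*} [AddCommGroup V] [Module ℝ V] (e1 e2 : V) (η ν xk yk : ℝ)
    (hx : xk ≠ 0) (hvy : ν * yk = 0) :
    (η * xk + ν) • ((yk / xk) • e1 + e2) = η • (yk • e1 + xk • e2) + ν • e2 := by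
  match_scalars
  · field_simp
    linear_combination hvy
  · ring

lemma per00 {V : Type*} [AddCommGroup V] [Module ℝ V] (e1 e2 : V) (η ν xk yk : ℝ) :
    (η * yk) • e1 + (η * xk + ν) • e2 = η • (yk • e1 + xk • e2) + ν • e2 := by
  match_scalars <;> ring

lemma tri {D : Setting n P Q} {xb yb : Vec n} (hfeas : feasR D xb yb) (i : Fin n) :
    i ∈ a01 xb yb ∨ i ∈ a10 xb yb ∨ i ∈ a00 xb yb := by
  have hxy := hfeas.2.2.2.1 i
  have hy0 := (hfeas.2.2.2.2 i).1
  rcases eq_or_ne (xb i) 0 with hx | hx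
  · rcases eq_or_ne (yb i) 0 with hy | hy
    · exact Or.inr (Or.inr (mem_a00'.mpr ⟨hx, hy⟩))
    · exact Or.inl (mem_a01'.mpr ⟨hx, lt_of_le_of_ne hy0 (Ne.symm hy)⟩)
  · have hy : yb i = 0 := by
      rcases mul_eq_zero.mp hxy with h | h
      · exact absurd h hx
      · exact h
    exact Or.inr (Or.inl (mem_a10'.mpr ⟨hx, hy⟩))

lemma sum_unit {M : Type*} [AddCommMonoid M] (f : Unit → M) : ∑ x : Unit, f x = f () := by simp

section Helpers
variable {ι : Type*} [Fintype ι] {F : Type*} [NormedAddCommGroup F] [NormedSpace ℝ F]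

lemma tendsto_sum_smul (b : ℕ → ι → F) (bl : ι → F)
    (hb : ∀ i, Tendsto (fun k => b k i) atTop (𝓝 (bl i)))
    (a : ℕ → ι → ℝ) (al : ι → ℝ) (ha : Tendsto a atTop (𝓝 al)) :
    Tendsto (fun k => ∑ i, a k i • b k i) atTop (𝓝 (∑ i, al i • bl i)) := by
  apply tendsto_finset_sum
  intro i _
  exact ((tendsto_pi_nhds.mp ha) i).smul (hb i)

lemma key_sub (c : ℕ → ι → F) (cl : ι → F)
    (hc : ∀ i, Tendsto (fun k => c k i) atTop (𝓝 (cl i)))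
    (S : Set ι)
    (hind : ∀ u : ι → ℝ, (∀ i ∉ S, u i = 0) → ∑ i, u i • cl i = 0 → u = 0)
    (u : ℕ → ι → ℝ) (hS : ∀ᶠ k in atTop, ∀ i ∉ S, u k i = 0)
    (v : F) (hv : Tendsto (fun k => ∑ i, u k i • c k i) atTop (𝓝 v)) :
    ∃ (φ : ℕ → ℕ) (ul : ι → ℝ), StrictMono φ ∧
      Tendsto (fun k => u (φ k)) atTop (𝓝 ul) ∧ ∑ i, ul i • cl i = v := by
  by_cases hbd : ∃ R : ℝ, {k | ‖u k‖ ≤ R}.Infinite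
  · obtain ⟨R, hR⟩ := hbd
    have hmem : ∀ m, ‖u (Nat.nth (fun k => ‖u k‖ ≤ R) m)‖ ≤ R :=
      fun m => Nat.nth_mem_of_infinite hR m
    have hsm : StrictMono (Nat.nth (fun k => ‖u k‖ ≤ R)) := Nat.nth_strictMono hR
    set φ0 := Nat.nth (fun k => ‖u k‖ ≤ R)
    have hball : ∀ m, u (φ0 m) ∈ Metric.closedBall (0 : ι → ℝ) R := by
      intro m; simpa [Metric.mem_closedBall, dist_zero_right] using hmem m
    obtain ⟨ul, -, ψ, hψ, hlim⟩ :=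
      (isCompact_closedBall (0 : ι → ℝ) R).tendsto_subseq hball
    refine ⟨φ0 ∘ ψ, ul, hsm.comp hψ, hlim, ?_⟩
    have h1 : Tendsto (fun k => ∑ i, u ((φ0 ∘ ψ) k) i • c ((φ0 ∘ ψ) k) i) atTop
        (𝓝 (∑ i, ul i • cl i)) := by
      refine tendsto_sum_smul _ _ (fun i => (hc i).comp ((hsm.comp hψ).tendsto_atTop)) _ _ hlim
    have h2 : Tendsto (fun k => ∑ i, u ((φ0 ∘ ψ) k) i • c ((φ0 ∘ ψ) k) i) atTop (𝓝 v) :=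
      hv.comp ((hsm.comp hψ).tendsto_atTop)
    exact tendsto_nhds_unique h1 h2
  · exfalso
    push_neg at hbd
    have hnorm : Tendsto (fun k => ‖u k‖) atTop atTop := by
      refine tendsto_atTop.2 fun R => ?_
      have := (hbd R).compl_mem_cofinite
      rw [Nat.cofinite_eq_atTop] at this
      exact Filter.mem_of_superset this fun k hk =>
        le_of_lt (lt_of_not_ge (by simpa using hk))
    set w : ℕ → ι → ℝ := fun k => ‖u k‖⁻¹ • u k with hw
    have hball : ∀ k, w k ∈ Metric.closedBall (0 : ι → ℝ) 1 := by
      intro k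
      simp only [Metric.mem_closedBall, dist_zero_right, hw, norm_smul, norm_inv, norm_norm]
      rcases eq_or_ne (‖u k‖) 0 with h | h
      · simp [h]
      · rw [inv_mul_cancel₀ h]
    obtain ⟨wl, -, ψ, hψ, hlim⟩ :=
      (isCompact_closedBall (0 : ι → ℝ) 1).tendsto_subseq hball
    have hr : Tendsto (fun k => ‖u k‖⁻¹) atTop (𝓝 0) := hnorm.inv_tendsto_atTop
    have hsum0 : Tendsto (fun k => ∑ i, w k i • c k i) atTop (𝓝 0) := by
      have heq : ∀ k, ∑ i, w k i • c k i = ‖u k‖⁻¹ • ∑ i, u k i • c k i := by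
        intro k
        rw [Finset.smul_sum]
        refine Finset.sum_congr rfl fun i _ => ?_
        simp [hw, smul_smul]
      rw [show (0 : F) = (0 : ℝ) • v by simp]
      exact Tendsto.congr (fun k => (heq k).symm) (hr.smul hv)
    have heq0 : ∑ i, wl i • cl i = 0 := by
      have h1 := tendsto_sum_smul (fun k => c (ψ k)) cl
        (fun i => (hc i).comp hψ.tendsto_atTop) (fun k => w (ψ k)) wl hlim
      exact tendsto_nhds_unique h1 (hsum0.comp hψ.tendsto_atTop)
    have hsupp : ∀ i ∉ S, wl i = 0 := by
      intro i hi
      have hev : ∀ᶠ k in atTop, w (ψ k) i = 0 := by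
        filter_upwards [hψ.tendsto_atTop.eventually hS] with k hk
        simp [hw, hk i hi]
      have h1 : Tendsto (fun k => w (ψ k) i) atTop (𝓝 (wl i)) := (tendsto_pi_nhds.mp hlim) i
      have h2 : Tendsto (fun k => w (ψ k) i) atTop (𝓝 0) :=
        tendsto_const_nhds.congr' (by filter_upwards [hev] with k hk using hk.symm)
      exact tendsto_nhds_unique h1 h2
    have hwl0 : wl = 0 := hind wl hsupp heq0
    have hone : Tendsto (fun k => ‖w (ψ k)‖) atTop (𝓝 1) := by
      have hev : ∀ᶠ k in atTop, ‖w (ψ k)‖ = 1 := by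
        have h1 : ∀ᶠ k in atTop, (1:ℝ) ≤ ‖u k‖ := hnorm.eventually_ge_atTop 1
        filter_upwards [hψ.tendsto_atTop.eventually h1] with k hk
        have hne : ‖u (ψ k)‖ ≠ 0 := by positivity
        simp [hw, norm_smul, inv_mul_cancel₀ hne]
      exact tendsto_const_nhds.congr' (by filter_upwards [hev] with k hk using hk.symm)
    have hcontra : (1:ℝ) = 0 := by
      have h1 : Tendsto (fun k => ‖w (ψ k)‖) atTop (𝓝 ‖wl‖) := hlim.norm
      rw [hwl0] at h1; simpa using tendsto_nhds_unique hone h1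
    norm_num at hcontra

end Helpers

lemma tendsto_grad {m : ℕ} (f : Vec m → ℝ) (hf : ContDiff ℝ 2 f) (x : ℕ → Vec m) (x0 : Vec m)
    (hx : Tendsto x atTop (𝓝 x0)) :
    Tendsto (fun k => grad f (x k)) atTop (𝓝 (grad f x0)) := by
  rw [tendsto_pi_nhds]
  intro i
  have hcont : Continuous fun y => fderiv ℝ f y (Pi.single i 1) :=
    (hf.continuous_fderiv (by norm_num)).clm_apply continuous_const
  exact (hcont.tendsto x0).comp hx

/-- Index type packing all the multiplier slots. -/
abbrev Idx (n : ℕ) (P Q : Type*) : Type _ := P ⊕ Q ⊕ Fin n ⊕ Unit ⊕ Fin n ⊕ Fin n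

/-- Signed H-multiplier. -/
def etaT (tk : ℝ) (x y : Vec n) (Mk : SMult n P Q) (i : Fin n) : ℝ :=
  (if i ∈ Hge tk x y then Mk.etaGe i else 0) - (if i ∈ Hle tk x y then Mk.etaLe i else 0)

/-- N-multiplier extended by zero. -/
def nuT (y : Vec n) (Mk : SMult n P Q) (i : Fin n) : ℝ :=
  if i ∈ Nact y then Mk.nu i else 0

/-- Packed coefficient vector at step k. -/
def uVec (D : Setting n P Q) (tk : ℝ) (x y xb yb : Vec n) (Mk : SMult n P Q) :
    Idx n P Q → ℝ :=
  Sum.elim Mk.lam <|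
  Sum.elim (fun q => if q ∈ Q0 D x then Mk.mu1 q else 0) <|
  Sum.elim (fun i => if i ∈ Eact D y then -Mk.mu2 i else 0) <|
  Sum.elim (fun _ => Mk.mu3) <|
  Sum.elim (fun i => if i ∈ a01 xb yb ∪ a00 xb yb then etaT tk x y Mk i * y i else 0)
    (fun i => if i ∈ a01 xb yb then nuT y Mk i else etaT tk x y Mk i * x i + nuT y Mk i)

/-- Packed column vectors at step k. -/
def cVec (D : Setting n P Q) (x y xb yb : Vec n) : Idx n P Q → Vec n × Vec n :=
  Sum.elim (fun p => (grad (D.h p) x, 0)) <|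
  Sum.elim (fun q => (grad (D.g q) x, 0)) <|
  Sum.elim (fun i => ey i) <|
  Sum.elim (fun _ => eAll) <|
  Sum.elim (fun i => if i ∈ a01 xb yb then ex i + (x i / y i) • ey i else ex i)
    (fun i => if i ∈ a10 xb yb then (y i / x i) • ex i + ey i else ey i)

/-- Limit column vectors. -/
def clVec (D : Setting n P Q) (xb : Vec n) : Idx n P Q → Vec n × Vec n :=
  Sum.elim (fun p => (grad (D.h p) xb, 0)) <|
  Sum.elim (fun q => (grad (D.g q) xb, 0)) <|
  Sum.elim (fun i => ey i) <|
  Sum.elim (fun _ => eAll) <|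
  Sum.elim (fun i => ex i) (fun i => ey i)

/-- Support set of admissible coefficients for MPOC-LICQ. -/
def suppS (D : Setting n P Q) (xb yb : Vec n) : Set (Idx n P Q) :=
  {j | Sum.elim (fun _ => True)
    (Sum.elim (fun q => q ∈ Q0 D xb)
     (Sum.elim (fun i => i ∈ Eact D yb)
      (Sum.elim (fun _ => (∑ i, yb i) = (n : ℝ) - D.s)
       (Sum.elim (fun i => i ∈ a01 xb yb ∪ a00 xb yb)
        (fun i => i ∈ a10 xb yb ∪ a00 xb yb))))) j}

end Aux

/-- Theorem 2: limits of KKT points of S(t) for t → 0 are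
T-stationary points of R, provided MPOC-LICQ holds at the limit. -/
theorem statement8 {n : ℕ} {P Q : Type*} [Fintype P] [Fintype Q]
    (D : Setting n P Q) (t : ℕ → ℝ) (htpos : ∀ k, 0 < t k)
    (ht0 : Filter.Tendsto t Filter.atTop (nhds 0))
    (X Y : ℕ → Vec n) (hK : ∀ k, KKT D (t k) (X k) (Y k))
    (xb yb : Vec n)
    (hconv : Filter.Tendsto (fun k => ((X k, Y k) : Vec n × Vec n))
      Filter.atTop (nhds (xb, yb)))
    (hfeas : feasR D xb yb) (hlicq : MPOC_LICQ D xb yb) :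
    TStat D xb yb := by
  classical
  choose M hM using hK
  have hX : Tendsto X atTop (𝓝 xb) := (continuous_fst.tendsto (xb, yb)).comp hconv
  have hY : Tendsto Y atTop (𝓝 yb) := (continuous_snd.tendsto (xb, yb)).comp hconv
  have hXi : ∀ i, Tendsto (fun k => X k i) atTop (𝓝 (xb i)) := tendsto_pi_nhds.mp hX
  have hYi : ∀ i, Tendsto (fun k => Y k i) atTop (𝓝 (yb i)) := tendsto_pi_nhds.mp hY
  have hYsum : Tendsto (fun k => ∑ i, Y k i) atTop (𝓝 (∑ i, yb i)) :=
    tendsto_finset_sum _ fun i _ => hYi i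
  -- eventual facts
  have hEvA01 : ∀ᶠ k in atTop, ∀ i ∈ a01 xb yb, 0 < Y k i := by
    refine eventually_all.mpr fun i => ?_
    by_cases h : i ∈ a01 xb yb
    · have hpos : 0 < yb i := (mem_a01'.mp h).2
      filter_upwards [(hYi i).eventually (eventually_gt_nhds hpos)] with k hk _ using hk
    · exact Eventually.of_forall fun k hik => absurd hik h
  have hEvA10 : ∀ᶠ k in atTop, ∀ i ∈ a10 xb yb, X k i ≠ 0 := by
    refine eventually_all.mpr fun i => ?_
    by_cases h : i ∈ a10 xb yb
    · have hne : xb i ≠ 0 := (mem_a10'.mp h).1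
      filter_upwards [(hXi i).eventually (eventually_ne_nhds hne)] with k hk _ using hk
    · exact Eventually.of_forall fun k hik => absurd hik h
  have hEvQ0 : ∀ᶠ k in atTop, ∀ q, q ∉ Q0 D xb → q ∉ Q0 D (X k) := by
    refine eventually_all.mpr fun q => ?_
    by_cases h : q ∈ Q0 D xb
    · exact Eventually.of_forall fun k hq => absurd h hq
    · have hne : D.g q xb ≠ 0 := fun h0 => h (mem_Q0'.mpr h0)
      have htd : Tendsto (fun k => D.g q (X k)) atTop (𝓝 (D.g q xb)) :=
        (((D.hg q).continuous).tendsto xb).comp hX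
      filter_upwards [htd.eventually (eventually_ne_nhds hne)] with k hk _
      exact fun hmem => hk (mem_Q0'.mp hmem)
  have hEvE : ∀ᶠ k in atTop, ∀ i, i ∉ Eact D yb → i ∉ Eact D (Y k) := by
    refine eventually_all.mpr fun i => ?_
    by_cases h : i ∈ Eact D yb
    · exact Eventually.of_forall fun k hq => absurd h hq
    · have hne : yb i ≠ 1 + D.ε := fun h0 => h (mem_Eact'.mpr h0)
      filter_upwards [(hYi i).eventually (eventually_ne_nhds hne)] with k hk _
      exact fun hmem => hk (mem_Eact'.mp hmem)
  have hEvMu3 : ∀ᶠ k in atTop, ((∑ i, yb i) ≠ (n : ℝ) - D.s → (M k).mu3 = 0) := by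
    by_cases hs : (∑ i, yb i) = (n : ℝ) - D.s
    · exact Eventually.of_forall fun k h => absurd hs h
    · have hev : ∀ᶠ k in atTop, (∑ i, Y k i) ≠ (n : ℝ) - D.s :=
        hYsum.eventually (eventually_ne_nhds hs)
      filter_upwards [hev] with k hk _
      rcases mul_eq_zero.mp ((hM k).2.2.2.2.1) with h | h
      · exact h
      · exact absurd (sub_eq_zero.mp h) hk
  -- support
  have hsupp : ∀ᶠ k in atTop, ∀ j ∉ suppS D xb yb,
      uVec D (t k) (X k) (Y k) xb yb (M k) j = 0 := by
    filter_upwards [hEvA01, hEvQ0, hEvE, hEvMu3] with k h01 hq0 he hm3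
    rintro (p | q | i | u | i | i) hj
    · simp [suppS] at hj
    · have hq : q ∉ Q0 D xb := by simpa [suppS] using hj
      simp only [uVec, Sum.elim_inl, Sum.elim_inr]
      rw [if_neg (hq0 q hq)]
    · have hi : i ∉ Eact D yb := by simpa [suppS] using hj
      simp only [uVec, Sum.elim_inl, Sum.elim_inr]
      rw [if_neg (he i hi)]
    · have hs : (∑ i, yb i) ≠ (n : ℝ) - D.s := by simpa [suppS] using hj
      simp only [uVec, Sum.elim_inl, Sum.elim_inr]
      exact hm3 hs
    · have hi : i ∉ a01 xb yb ∪ a00 xb yb := by simpa [suppS] using hj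
      simp only [uVec, Sum.elim_inl, Sum.elim_inr]
      rw [if_neg hi]
    · have hi : i ∉ a10 xb yb ∪ a00 xb yb := by simpa [suppS] using hj
      have h01m : i ∈ a01 xb yb := by
        rcases tri hfeas i with h | h | h
        · exact h
        · exact absurd (Finset.mem_union_left _ h) hi
        · exact absurd (Finset.mem_union_right _ h) hi
      simp only [uVec, Sum.elim_inl, Sum.elim_inr]
      rw [if_pos h01m]
      unfold nuT
      rw [if_neg fun hN => (ne_of_gt (h01 i h01m)) (mem_Nact'.mp hN)]
  -- eventual equation
  have heq : ∀ᶠ k in atTop,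
      (∑ j, uVec D (t k) (X k) (Y k) xb yb (M k) j • cVec D (X k) (Y k) xb yb j)
        = ((grad D.f (X k), D.c) : Vec n × Vec n) := by
    filter_upwards [hEvA01, hEvA10] with k h01 h10
    obtain ⟨hfS, hmu1k, hmu2k, hmu3k, hcomplk, hgek, hlek, hnuk, heqk⟩ := hM k
    have hPer : ∀ i ∈ (Finset.univ : Finset (Fin n)),
        (if i ∈ a01 xb yb ∪ a00 xb yb then etaT (t k) (X k) (Y k) (M k) i * Y k i else 0) •
          (if i ∈ a01 xb yb then ex i + (X k i / Y k i) • ey i else ex i) +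
        (if i ∈ a01 xb yb then nuT (Y k) (M k) i
          else etaT (t k) (X k) (Y k) (M k) i * X k i + nuT (Y k) (M k) i) •
          (if i ∈ a10 xb yb then (Y k i / X k i) • ex i + ey i else ey i) =
        etaT (t k) (X k) (Y k) (M k) i • hvec (X k) (Y k) i + nuT (Y k) (M k) i • ey i := by
      intro i _
      have hvy : nuT (Y k) (M k) i * Y k i = 0 := by
        unfold nuT
        by_cases hN : i ∈ Nact (Y k)
        · rw [if_pos hN, mem_Nact'.mp hN, mul_zero]
        · rw [if_neg hN, zero_mul]
      rcases tri hfeas i with h | h | h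
      · have hy := h01 i h
        have hyne : Y k i ≠ 0 := ne_of_gt hy
        have hn10 : i ∉ a10 xb yb := fun h' => (mem_a10'.mp h').1 (mem_a01'.mp h).1
        rw [if_pos (Finset.mem_union_left _ h), if_pos h, if_pos h, if_neg hn10, hvec_eq]
        exact per01 (ex i) (ey i) _ _ (X k i) (Y k i) hyne
      · have hx := h10 i h
        have hn01 : i ∉ a01 xb yb := fun h' => (mem_a10'.mp h).1 (mem_a01'.mp h').1
        have hnu : i ∉ a01 xb yb ∪ a00 xb yb := by
          rw [Finset.mem_union]
          rintro (h' | h')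
          · exact hn01 h'
          · exact (mem_a10'.mp h).1 (mem_a00'.mp h').1
        rw [if_neg hnu, zero_smul, zero_add, if_neg hn01, if_pos h, hvec_eq]
        exact per10 (ex i) (ey i) _ _ (X k i) (Y k i) hx hvy
      · have hn01 : i ∉ a01 xb yb := fun h' => by
          have h2 := (mem_a01'.mp h').2
          rw [(mem_a00'.mp h).2] at h2
          exact lt_irrefl 0 h2
        have hn10 : i ∉ a10 xb yb := fun h' => (mem_a10'.mp h').1 (mem_a00'.mp h).1
        rw [if_pos (Finset.mem_union_right _ h), if_neg hn01, if_neg hn01, if_neg hn10, hvec_eq]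
        exact per00 (ex i) (ey i) _ _ (X k i) (Y k i)
    rw [show ((grad D.f (X k), D.c) : Vec n × Vec n) = _ from heqk]
    rw [Fintype.sum_sum_type, Fintype.sum_sum_type, Fintype.sum_sum_type, Fintype.sum_sum_type,
      Fintype.sum_sum_type, sum_unit]
    simp only [uVec, cVec, Sum.elim_inl, Sum.elim_inr]
    rw [← Finset.sum_add_distrib]
    rw [Finset.sum_congr rfl hPer]
    simp only [etaT, nuT, sub_smul, ite_smul, zero_smul, neg_smul]
    simp only [Finset.sum_add_distrib, Finset.sum_sub_distrib, Finset.sum_ite_mem,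
      Finset.univ_inter, Finset.sum_neg_distrib]
    abel
  -- column convergence
  have hc : ∀ j, Tendsto (fun k => cVec D (X k) (Y k) xb yb j) atTop (𝓝 (clVec D xb j)) := by
    rintro (p | q | i | u | i | i)
    · simp only [cVec, clVec, Sum.elim_inl, Sum.elim_inr]
      exact (tendsto_grad (D.h p) (D.hh p) X xb hX).prodMk_nhds tendsto_const_nhds
    · simp only [cVec, clVec, Sum.elim_inl, Sum.elim_inr]
      exact (tendsto_grad (D.g q) (D.hg q) X xb hX).prodMk_nhds tendsto_const_nhds
    · simp only [cVec, clVec, Sum.elim_inl, Sum.elim_inr]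
      exact tendsto_const_nhds
    · simp only [cVec, clVec, Sum.elim_inl, Sum.elim_inr]
      exact tendsto_const_nhds
    · simp only [cVec, clVec, Sum.elim_inl, Sum.elim_inr]
      by_cases h : i ∈ a01 xb yb
      · simp only [if_pos h]
        have hx0 : xb i = 0 := (mem_a01'.mp h).1
        have hy : yb i ≠ 0 := ne_of_gt (mem_a01'.mp h).2
        have htd : Tendsto (fun k => ex i + (X k i / Y k i) • ey (n := n) i) atTop
            (𝓝 (ex i + (xb i / yb i) • ey i)) :=
          tendsto_const_nhds.add (((hXi i).div (hYi i) hy).smul tendsto_const_nhds)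
        simpa [hx0] using htd
      · simp only [if_neg h]
        exact tendsto_const_nhds
    · simp only [cVec, clVec, Sum.elim_inl, Sum.elim_inr]
      by_cases h : i ∈ a10 xb yb
      · simp only [if_pos h]
        have hy0 : yb i = 0 := (mem_a10'.mp h).2
        have hx : xb i ≠ 0 := (mem_a10'.mp h).1
        have htd : Tendsto (fun k => (Y k i / X k i) • ex (n := n) i + ey i) atTop
            (𝓝 ((yb i / xb i) • ex i + ey i)) :=
          ((((hYi i).div (hXi i) hx).smul tendsto_const_nhds).add tendsto_const_nhds)
        simpa [hy0] using htd
      · simp only [if_neg h]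
        exact tendsto_const_nhds
  -- independence from MPOC-LICQ
  have hind : ∀ w : Idx n P Q → ℝ, (∀ j ∉ suppS D xb yb, w j = 0) →
      (∑ j, w j • clVec D xb j) = 0 → w = 0 := by
    intro w hw hzero
    have hz' : (∑ p, w (Sum.inl p) • ((grad (D.h p) xb, (0 : Vec n)) : Vec n × Vec n))
        + (∑ q ∈ Q0 D xb, w (Sum.inr (Sum.inl q)) •
            ((grad (D.g q) xb, (0 : Vec n)) : Vec n × Vec n))
        + (∑ i ∈ Eact D yb, w (Sum.inr (Sum.inr (Sum.inl i))) • ey i)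
        + w (Sum.inr (Sum.inr (Sum.inr (Sum.inl ())))) • eAll
        + (∑ i ∈ a01 xb yb ∪ a00 xb yb,
            w (Sum.inr (Sum.inr (Sum.inr (Sum.inr (Sum.inl i))))) • ex i)
        + (∑ i ∈ a10 xb yb ∪ a00 xb yb,
            w (Sum.inr (Sum.inr (Sum.inr (Sum.inr (Sum.inr i))))) • ey i) = 0 := by
      rw [← hzero]
      rw [Fintype.sum_sum_type, Fintype.sum_sum_type, Fintype.sum_sum_type, Fintype.sum_sum_type,
        Fintype.sum_sum_type, sum_unit]
      simp only [clVec, Sum.elim_inl, Sum.elim_inr]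
      rw [Finset.sum_subset (Finset.subset_univ (Q0 D xb))
          (fun q _ hq => by rw [hw _ (by simpa [suppS] using hq), zero_smul]),
        Finset.sum_subset (Finset.subset_univ (Eact D yb))
          (fun i _ hi => by rw [hw _ (by simpa [suppS] using hi), zero_smul]),
        Finset.sum_subset (Finset.subset_univ (a01 xb yb ∪ a00 xb yb))
          (fun i _ hi => by rw [hw _ (by simpa [suppS] using hi), zero_smul]),
        Finset.sum_subset (Finset.subset_univ (a10 xb yb ∪ a00 xb yb))
          (fun i _ hi => by rw [hw _ (by simpa [suppS] using hi), zero_smul])]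
      abel
    obtain ⟨hl, hq, he, hm, hs1, hs2⟩ := hlicq (fun p => w (Sum.inl p))
      (fun q => w (Sum.inr (Sum.inl q))) (fun i => w (Sum.inr (Sum.inr (Sum.inl i))))
      (w (Sum.inr (Sum.inr (Sum.inr (Sum.inl ())))))
      (fun i => w (Sum.inr (Sum.inr (Sum.inr (Sum.inr (Sum.inl i))))))
      (fun i => w (Sum.inr (Sum.inr (Sum.inr (Sum.inr (Sum.inr i))))))
      (fun hne => hw _ (by simpa [suppS] using hne)) hz'
    funext j
    rcases j with p | q | i | u | i | i
    · exact hl p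
    · by_cases hmem : q ∈ Q0 D xb
      · exact hq q hmem
      · exact hw _ (by simpa [suppS] using hmem)
    · by_cases hmem : i ∈ Eact D yb
      · exact he i hmem
      · exact hw _ (by simpa [suppS] using hmem)
    · exact hm
    · by_cases hmem : i ∈ a01 xb yb ∪ a00 xb yb
      · exact hs1 i hmem
      · exact hw _ (by simpa [suppS] using hmem)
    · by_cases hmem : i ∈ a10 xb yb ∪ a00 xb yb
      · exact hs2 i hmem
      · exact hw _ (by simpa [suppS] using hmem)
  -- limit of the sums
  have hv : Tendsto (fun k => ∑ j, uVec D (t k) (X k) (Y k) xb yb (M k) j •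
      cVec D (X k) (Y k) xb yb j) atTop (𝓝 ((grad D.f xb, D.c) : Vec n × Vec n)) := by
    have h2 : Tendsto (fun k => ((grad D.f (X k), D.c) : Vec n × Vec n)) atTop
        (𝓝 (grad D.f xb, D.c)) :=
      (tendsto_grad D.f D.hf X xb hX).prodMk_nhds tendsto_const_nhds
    exact h2.congr' (by filter_upwards [heq] with k hk using hk.symm)
  obtain ⟨φ, ul, hφmono, hul, hEq⟩ := key_sub (fun k => cVec D (X k) (Y k) xb yb) (clVec D xb)
    hc (suppS D xb yb) hind (fun k => uVec D (t k) (X k) (Y k) xb yb (M k)) hsupp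
    ((grad D.f xb, D.c)) hv
  have hulj : ∀ j, Tendsto (fun k => uVec D (t (φ k)) (X (φ k)) (Y (φ k)) xb yb (M (φ k)) j)
      atTop (𝓝 (ul j)) := tendsto_pi_nhds.mp hul
  have hul0 : ∀ j ∉ suppS D xb yb, ul j = 0 := by
    intro j hj
    refine tendsto_nhds_unique (hulj j) (tendsto_const_nhds.congr' ?_)
    filter_upwards [hφmono.tendsto_atTop.eventually hsupp] with k hk using (hk j hj).symm
  refine ⟨⟨fun p => ul (Sum.inl p), fun q => ul (Sum.inr (Sum.inl q)),
    fun i => -(ul (Sum.inr (Sum.inr (Sum.inl i)))),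
    ul (Sum.inr (Sum.inr (Sum.inr (Sum.inl ())))),
    fun i => ul (Sum.inr (Sum.inr (Sum.inr (Sum.inr (Sum.inl i))))),
    fun i => ul (Sum.inr (Sum.inr (Sum.inr (Sum.inr (Sum.inr i))))),
    fun i => ul (Sum.inr (Sum.inr (Sum.inr (Sum.inr (Sum.inl i))))),
    fun i => ul (Sum.inr (Sum.inr (Sum.inr (Sum.inr (Sum.inr i)))))⟩,
    hfeas, ?_, ?_, ?_, ?_, ?_, ?_⟩
  · intro q hq
    refine ge_of_tendsto' (hulj (Sum.inr (Sum.inl q))) fun k => ?_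
    simp only [uVec, Sum.elim_inl, Sum.elim_inr]
    by_cases hmem : q ∈ Q0 D (X (φ k))
    · rw [if_pos hmem]; exact (hM (φ k)).2.1 q hmem
    · rw [if_neg hmem]
  · intro i hi
    rw [neg_nonneg]
    refine le_of_tendsto' (hulj (Sum.inr (Sum.inr (Sum.inl i)))) fun k => ?_
    simp only [uVec, Sum.elim_inl, Sum.elim_inr]
    by_cases hmem : i ∈ Eact D (Y (φ k))
    · rw [if_pos hmem]
      have := (hM (φ k)).2.2.1 i hmem
      linarith
    · rw [if_neg hmem]
  · refine ge_of_tendsto' (hulj (Sum.inr (Sum.inr (Sum.inr (Sum.inl ()))))) fun k => ?_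
    simp only [uVec, Sum.elim_inl, Sum.elim_inr]
    exact (hM (φ k)).2.2.2.1
  · by_cases hs : (∑ i, yb i) = (n : ℝ) - D.s
    · rw [hs, sub_self, mul_zero]
    · rw [hul0 _ (by simpa [suppS] using hs), zero_mul]
  · intro i hi
    have hn01 : i ∉ a01 xb yb := fun h' => by
      have h2 := (mem_a01'.mp h').2
      rw [(mem_a00'.mp hi).2] at h2
      exact lt_irrefl 0 h2
    have hC : ∀ k, uVec D (t k) (X k) (Y k) xb yb (M k)
          (Sum.inr (Sum.inr (Sum.inr (Sum.inr (Sum.inl i))))) *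
        max (uVec D (t k) (X k) (Y k) xb yb (M k)
          (Sum.inr (Sum.inr (Sum.inr (Sum.inr (Sum.inr i)))))) 0 = 0 := by
      intro k
      obtain ⟨hfS, hmu1k, hmu2k, hmu3k, hcomplk, hgek, hlek, hnuk, -⟩ := hM k
      simp only [uVec, Sum.elim_inl, Sum.elim_inr]
      rw [if_pos (Finset.mem_union_right _ hi), if_neg hn01]
      by_cases hN : i ∈ Nact (Y k)
      · rw [mem_Nact'.mp hN, mul_zero, zero_mul]
      · have hnu0 : nuT (Y k) (M k) i = 0 := by unfold nuT; rw [if_neg hN]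
        rw [hnu0, add_zero]
        by_cases hG : i ∈ Hge (t k) (X k) (Y k)
        · have hnotL : i ∉ Hle (t k) (X k) (Y k) := by
            rw [mem_Hle']
            rw [mem_Hge'] at hG
            intro h'
            rw [hG] at h'
            linarith [htpos k]
          have heta : etaT (t k) (X k) (Y k) (M k) i = (M k).etaGe i := by
            unfold etaT; rw [if_pos hG, if_neg hnotL, sub_zero]
          have hge0 : 0 ≤ (M k).etaGe i := hgek i hG
          have hyne : Y k i ≠ 0 := by
            intro h0
            rw [mem_Hge'] at hG
            rw [h0, mul_zero] at hG
            linarith [htpos k]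
          have hypos : 0 < Y k i := lt_of_le_of_ne (hfS.2.2.2.2 i).1 (Ne.symm hyne)
          have hxneg : X k i ≤ 0 := by
            rw [mem_Hge'] at hG
            nlinarith [htpos k]
          have hmax : max ((M k).etaGe i * X k i) 0 = 0 :=
            max_eq_right (by nlinarith)
          rw [heta, hmax, mul_zero]
        · by_cases hL : i ∈ Hle (t k) (X k) (Y k)
          · have heta : etaT (t k) (X k) (Y k) (M k) i = -(M k).etaLe i := by
              unfold etaT; rw [if_neg hG, if_pos hL, zero_sub]
            have hle0 : 0 ≤ (M k).etaLe i := hlek i hL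
            have hyne : Y k i ≠ 0 := by
              intro h0
              rw [mem_Hle'] at hL
              rw [h0, mul_zero] at hL
              linarith [htpos k]
            have hypos : 0 < Y k i := lt_of_le_of_ne (hfS.2.2.2.2 i).1 (Ne.symm hyne)
            have hxpos : 0 ≤ X k i := by
              rw [mem_Hle'] at hL
              nlinarith [htpos k]
            have hmax : max (-(M k).etaLe i * X k i) 0 = 0 :=
              max_eq_right (by nlinarith)
            rw [heta, hmax, mul_zero]
          · have heta : etaT (t k) (X k) (Y k) (M k) i = 0 := by
              unfold etaT; rw [if_neg hG, if_neg hL, sub_zero]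
            rw [heta, zero_mul, zero_mul]
    have hlim : Tendsto (fun k => uVec D (t (φ k)) (X (φ k)) (Y (φ k)) xb yb (M (φ k))
          (Sum.inr (Sum.inr (Sum.inr (Sum.inr (Sum.inl i))))) *
        max (uVec D (t (φ k)) (X (φ k)) (Y (φ k)) xb yb (M (φ k))
          (Sum.inr (Sum.inr (Sum.inr (Sum.inr (Sum.inr i)))))) 0) atTop
        (𝓝 (ul (Sum.inr (Sum.inr (Sum.inr (Sum.inr (Sum.inl i))))) *
          max (ul (Sum.inr (Sum.inr (Sum.inr (Sum.inr (Sum.inr i)))))) 0)) :=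
      (hulj _).mul ((hulj _).max tendsto_const_nhds)
    have h0 : ul (Sum.inr (Sum.inr (Sum.inr (Sum.inr (Sum.inl i))))) *
        max (ul (Sum.inr (Sum.inr (Sum.inr (Sum.inr (Sum.inr i)))))) 0 = 0 :=
      tendsto_nhds_unique hlim
        (tendsto_const_nhds.congr fun k => (hC (φ k)).symm)
    rcases mul_eq_zero.mp h0 with h | h
    · exact Or.inl h
    · exact Or.inr (max_eq_right_iff.mp h)
  · -- T-stationarity equation
    have hd1 : Disjoint (a01 xb yb) (a00 xb yb) := by
      rw [Finset.disjoint_left]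
      intro i h1 h0
      have h2 := (mem_a01'.mp h1).2
      rw [(mem_a00'.mp h0).2] at h2
      exact lt_irrefl 0 h2
    have hd2 : Disjoint (a10 xb yb) (a00 xb yb) := by
      rw [Finset.disjoint_left]
      intro i h1 h0
      exact (mem_a10'.mp h1).1 (mem_a00'.mp h0).1
    show ((grad D.f xb, D.c) : Vec n × Vec n) = _
    rw [← hEq]
    rw [Fintype.sum_sum_type, Fintype.sum_sum_type, Fintype.sum_sum_type, Fintype.sum_sum_type,
      Fintype.sum_sum_type, sum_unit]
    simp only [clVec, Sum.elim_inl, Sum.elim_inr]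
    rw [← Finset.sum_subset (Finset.subset_univ (Q0 D xb))
        (fun q _ hq => by rw [hul0 _ (by simpa [suppS] using hq), zero_smul]),
      ← Finset.sum_subset (Finset.subset_univ (Eact D yb))
        (fun i _ hi => by rw [hul0 _ (by simpa [suppS] using hi), zero_smul]),
      ← Finset.sum_subset (Finset.subset_univ (a01 xb yb ∪ a00 xb yb))
        (fun i _ hi => by rw [hul0 _ (by simpa [suppS] using hi), zero_smul]),
      ← Finset.sum_subset (Finset.subset_univ (a10 xb yb ∪ a00 xb yb))
        (fun i _ hi => by rw [hul0 _ (by simpa [suppS] using hi), zero_smul]),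
      Finset.sum_union hd1, Finset.sum_union hd2]
    simp only [neg_smul, Finset.sum_neg_distrib, neg_neg, Finset.sum_add_distrib]
    abel

end Scholtes
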